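/- Given a sequence of Markov kernels (K_i) on a finite set V and a positive probability measure μ_0, set μ_n = μ_0 K_{0,n} and let σ_1(i) be the second largest singular value of K_i : ℓ²(μ_i) → ℓ²(μ_{i-1}). Then for all x, z ∈ V and n ≥ 1, |K_{0,n}(x,z)/μ_n(z) − 1| ≤ (1/μ_0(x) − 1)^{1/2} (1/μ_n(z) − 1)^{1/2} ∏_{i=1}^n σ_1(i). -/

import Mathlib

open BigOperators Finset

/-- The composed kernel K_{0,n} = K₁K₂⋯K_n of a sequence of kernels. -/
def Kprod {V : Type*} [Fintype V] [DecidableEq V] (K : ℕ → Matrix V V ℝ) :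
    ℕ → Matrix V V ℝ
  | 0 => 1
  | n + 1 => Kprod K n * K (n + 1)

/-- Pointwise bound for a mean-zero function in terms of its weighted ℓ² norm. -/
lemma pointwise_bound {V : Type*} [Fintype V] [DecidableEq V]
    (ν : V → ℝ) (hν : ∀ x, 0 < ν x) (hν1 : ∑ x, ν x = 1)
    (g : V → ℝ) (hg : ∑ y, g y * ν y = 0) (x : V) :
    g x ^ 2 ≤ (1 / ν x - 1) * ∑ y, g y ^ 2 * ν y := by
  set S := ∑ y, g y ^ 2 * ν y with hS
  have hx1 : ν x ≤ 1 := by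
    have := Finset.single_le_sum (f := ν) (fun i _ => (hν i).le) (Finset.mem_univ x)
    linarith [hν1 ▸ this]
  have hsplit : g x * ν x + ∑ y ∈ Finset.univ.erase x, g y * ν y = 0 := by
    rw [← Finset.add_sum_erase Finset.univ (fun y => g y * ν y) (Finset.mem_univ x)] at hg
    exact hg
  have hνsplit : ν x + ∑ y ∈ Finset.univ.erase x, ν y = 1 := by
    rw [← Finset.add_sum_erase Finset.univ ν (Finset.mem_univ x)] at hν1
    exact hν1
  have hSsplit : g x ^ 2 * ν x + ∑ y ∈ Finset.univ.erase x, g y ^ 2 * ν y = S := by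
    rw [hS, ← Finset.add_sum_erase Finset.univ (fun y => g y ^ 2 * ν y) (Finset.mem_univ x)]
  have hcs : (∑ y ∈ Finset.univ.erase x, g y * ν y) ^ 2 ≤
      (∑ y ∈ Finset.univ.erase x, g y ^ 2 * ν y) * ∑ y ∈ Finset.univ.erase x, ν y := by
    have := Finset.sum_mul_sq_le_sq_mul_sq (Finset.univ.erase x)
      (fun y => g y * Real.sqrt (ν y)) (fun y => Real.sqrt (ν y))
    have e1 : ∀ y, g y * Real.sqrt (ν y) * Real.sqrt (ν y) = g y * ν y := by
      intro y; rw [mul_assoc, Real.mul_self_sqrt (hν y).le]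
    have e2 : ∀ y, (g y * Real.sqrt (ν y)) ^ 2 = g y ^ 2 * ν y := by
      intro y; rw [mul_pow, Real.sq_sqrt (hν y).le]
    have e3 : ∀ y, Real.sqrt (ν y) ^ 2 = ν y := fun y => Real.sq_sqrt (hν y).le
    simp only [e1, e2, e3] at this
    exact this
  have a1 : ∑ y ∈ Finset.univ.erase x, g y * ν y = -(g x * ν x) := by linarith
  have a2 : ∑ y ∈ Finset.univ.erase x, ν y = 1 - ν x := by linarith
  have a3 : ∑ y ∈ Finset.univ.erase x, g y ^ 2 * ν y = S - g x ^ 2 * ν x := by linarith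
  rw [a1, a2, a3] at hcs
  have hkey : g x ^ 2 * ν x ≤ (1 - ν x) * S := by nlinarith [hcs]
  have hνx := hν x
  have heq : (1 / ν x - 1) * S = (1 - ν x) * S / ν x := by field_simp
  rw [heq, le_div_iff₀ hνx]
  linarith

/-- Theorem 1.1 (singular value merging bound): if σ₁(i) is the second largest
singular value of K_i : ℓ²(μ_i) → ℓ²(μ_{i-1}) (expressed here by the variational
bound on the orthogonal complement of the constants), then
|K_{0,n}(x,z)/μ_n(z) - 1| ≤ (1/μ₀(x)-1)^{1/2} (1/μ_n(z)-1)^{1/2} ∏₁ⁿ σ₁(i). -/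
theorem stmt19 {V : Type*} [Fintype V] [DecidableEq V] [Nonempty V]
    (K : ℕ → Matrix V V ℝ)
    (hK0 : ∀ i, 1 ≤ i → ∀ x y, 0 ≤ K i x y)
    (hK1 : ∀ i, 1 ≤ i → ∀ x, ∑ y, K i x y = 1)
    (μ : ℕ → V → ℝ)
    (hμpos : ∀ n x, 0 < μ n x) (hμ1 : ∑ x, μ 0 x = 1)
    (hμ : ∀ n, μ n = Matrix.vecMul (μ 0) (Kprod K n))
    (σ₁ : ℕ → ℝ) (hσ₁0 : ∀ i, 0 ≤ σ₁ i)
    (hσ₁ : ∀ i, 1 ≤ i → ∀ f : V → ℝ, (∑ x, f x * μ i x = 0) →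
      ∑ x, ((K i).mulVec f x) ^ 2 * μ (i - 1) x ≤ (σ₁ i) ^ 2 * ∑ x, (f x) ^ 2 * μ i x) :
    ∀ n, 1 ≤ n → ∀ x z : V,
      |Kprod K n x z / μ n z - 1| ≤
        Real.sqrt (1 / μ 0 x - 1) * Real.sqrt (1 / μ n z - 1) * ∏ i ∈ Icc 1 n, σ₁ i := by
  -- μ (n+1) = μ n * K (n+1)
  have hstep : ∀ n : ℕ, μ (n + 1) = Matrix.vecMul (μ n) (K (n + 1)) := by
    intro n
    rw [hμ (n + 1), hμ n]
    show Matrix.vecMul (μ 0) (Kprod K n * K (n + 1)) = _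
    rw [← Matrix.vecMul_vecMul]
  -- all μ n sum to 1
  have hsum : ∀ n : ℕ, ∑ x, μ n x = 1 := by
    intro n
    induction n with
    | zero => exact hμ1
    | succ m ih =>
      rw [hstep m]
      have : ∑ y, Matrix.vecMul (μ m) (K (m + 1)) y
          = ∑ x, μ m x * ∑ y, K (m + 1) x y := by
        simp only [Matrix.vecMul, dotProduct, Finset.mul_sum]
        rw [Finset.sum_comm]
      rw [this]
      have h1 : ∀ x ∈ Finset.univ, μ m x * ∑ y, K (m + 1) x y = μ m x := by
        intro x _; rw [hK1 (m + 1) (by omega) x, mul_one]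
      rw [Finset.sum_congr rfl h1, ih]
  -- contraction estimate for mean-zero functions
  have contr : ∀ n : ℕ, ∀ f : V → ℝ, (∑ y, f y * μ n y = 0) →
      ∑ y, ((Kprod K n).mulVec f y) ^ 2 * μ 0 y ≤
        (∏ i ∈ Icc 1 n, σ₁ i) ^ 2 * ∑ y, (f y) ^ 2 * μ n y := by
    intro n
    induction n with
    | zero =>
      intro f _
      simp [Kprod, Matrix.one_mulVec]
    | succ m ih =>
      intro f hf
      set g : V → ℝ := (K (m + 1)).mulVec f with hg
      have hgmean : ∑ y, g y * μ m y = 0 := by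
        have : ∑ y, g y * μ m y = ∑ y, f y * Matrix.vecMul (μ m) (K (m + 1)) y := by
          simp only [hg, Matrix.mulVec, Matrix.vecMul, dotProduct,
            Finset.sum_mul, Finset.mul_sum]
          rw [Finset.sum_comm]
          apply Finset.sum_congr rfl; intro y _
          apply Finset.sum_congr rfl; intro x _; ring
        rw [this, ← hstep m, hf]
      have hKg : (Kprod K (m + 1)).mulVec f = (Kprod K m).mulVec g := by
        show (Kprod K m * K (m + 1)).mulVec f = _
        rw [← Matrix.mulVec_mulVec]
      have h1 := ih g hgmean
      have h2 := hσ₁ (m + 1) (by omega) f hf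
      simp only [Nat.add_sub_cancel] at h2
      have hProd : ∏ i ∈ Icc 1 (m + 1), σ₁ i = (∏ i ∈ Icc 1 m, σ₁ i) * σ₁ (m + 1) :=
        Finset.prod_Icc_succ_top (by omega) σ₁
      have hP0 : (0:ℝ) ≤ (∏ i ∈ Icc 1 m, σ₁ i) ^ 2 := sq_nonneg _
      calc ∑ y, ((Kprod K (m + 1)).mulVec f y) ^ 2 * μ 0 y
          = ∑ y, ((Kprod K m).mulVec g y) ^ 2 * μ 0 y := by rw [hKg]
        _ ≤ (∏ i ∈ Icc 1 m, σ₁ i) ^ 2 * ∑ y, (g y) ^ 2 * μ m y := h1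
        _ ≤ (∏ i ∈ Icc 1 m, σ₁ i) ^ 2 * ((σ₁ (m + 1)) ^ 2 * ∑ y, (f y) ^ 2 * μ (m + 1) y) :=
            mul_le_mul_of_nonneg_left h2 hP0
        _ = (∏ i ∈ Icc 1 (m + 1), σ₁ i) ^ 2 * ∑ y, (f y) ^ 2 * μ (m + 1) y := by
            rw [hProd]; ring
  -- main argument
  intro n _ x z
  set P : ℝ := ∏ i ∈ Icc 1 n, σ₁ i with hP
  have hPnn : 0 ≤ P := Finset.prod_nonneg fun i _ => hσ₁0 i
  set h : V → ℝ := fun y => (if y = z then (1:ℝ) else 0) / μ n z - 1 with hh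
  have hμnz := hμpos n z
  -- h has mean zero w.r.t. μ n
  have hmean : ∑ y, h y * μ n y = 0 := by
    have expand : ∀ y, h y * μ n y
        = (if y = z then μ n y / μ n z else 0) - μ n y := by
      intro y; simp only [hh]; split <;> ring
    simp only [expand, Finset.sum_sub_distrib, Finset.sum_ite_eq' Finset.univ,
      Finset.mem_univ, if_true, hsum n]
    field_simp
    ring
  -- ℓ² norm of h
  have hnorm : ∑ y, (h y) ^ 2 * μ n y = 1 / μ n z - 1 := by
    have expand : ∀ y, (h y) ^ 2 * μ n y
        = (if y = z then (1 / μ n z) ^ 2 * μ n y - 2 * (1 / μ n z) * μ n y else 0)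
          + μ n y := by
      intro y; simp only [hh]; split <;> ring
    simp only [expand, Finset.sum_add_distrib, Finset.sum_ite_eq' Finset.univ,
      Finset.mem_univ, if_true, hsum n]
    field_simp
    ring
  set g : V → ℝ := (Kprod K n).mulVec h with hg
  -- g is the deviation K_{0,n}(x,z)/μ_n(z) - 1
  have hrow : ∀ m : ℕ, ∀ w : V, ∑ y, Kprod K m w y = 1 := by
    intro m
    induction m with
    | zero => intro w; simp [Kprod, Matrix.one_apply]
    | succ k ih =>
      intro w
      show ∑ y, (Kprod K k * K (k + 1)) w y = 1
      simp only [Matrix.mul_apply]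
      rw [Finset.sum_comm]
      have : ∀ u ∈ Finset.univ, ∑ y, Kprod K k w u * K (k + 1) u y = Kprod K k w u := by
        intro u _; rw [← Finset.mul_sum, hK1 (k + 1) (by omega) u, mul_one]
      rw [Finset.sum_congr rfl this, ih w]
  have hgx : g x = Kprod K n x z / μ n z - 1 := by
    simp only [hg, Matrix.mulVec, dotProduct, hh]
    have : ∀ y, Kprod K n x y * ((if y = z then (1:ℝ) else 0) / μ n z - 1)
        = (if y = z then Kprod K n x y / μ n z else 0) - Kprod K n x y := by
      intro y; split <;> ring
    simp only [this, Finset.sum_sub_distrib, Finset.sum_ite_eq' Finset.univ,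
      Finset.mem_univ, if_true, hrow n x]
  -- g has mean zero w.r.t. μ 0
  have hgmean : ∑ y, g y * μ 0 y = 0 := by
    have : ∑ y, g y * μ 0 y = ∑ y, h y * Matrix.vecMul (μ 0) (Kprod K n) y := by
      simp only [hg, Matrix.mulVec, Matrix.vecMul, dotProduct,
        Finset.sum_mul, Finset.mul_sum]
      rw [Finset.sum_comm]
      apply Finset.sum_congr rfl; intro y _
      apply Finset.sum_congr rfl; intro w _; ring
    rw [this, ← hμ n, hmean]
  -- combine
  have hcontr := contr n h hmean
  rw [hnorm] at hcontr
  have hpw := pointwise_bound (μ 0) (hμpos 0) hμ1 g hgmean x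
  have hA : (0:ℝ) ≤ 1 / μ 0 x - 1 := by
    have h1 : μ 0 x ≤ 1 := by
      have := Finset.single_le_sum (f := μ 0) (fun i _ => (hμpos 0 i).le) (Finset.mem_univ x)
      linarith [hμ1 ▸ this]
    have h2 : (1:ℝ) ≤ 1 / μ 0 x := by
      rw [le_div_iff₀ (hμpos 0 x)]; linarith
    linarith
  have hB : (0:ℝ) ≤ 1 / μ n z - 1 := by
    have h1 : μ n z ≤ 1 := by
      have := Finset.single_le_sum (f := μ n) (fun i _ => (hμpos n i).le) (Finset.mem_univ z)
      linarith [hsum n ▸ this]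
    have h2 : (1:ℝ) ≤ 1 / μ n z := by
      rw [le_div_iff₀ hμnz]; linarith
    linarith
  have hkey : g x ^ 2 ≤ (1 / μ 0 x - 1) * (P ^ 2 * (1 / μ n z - 1)) := by
    calc g x ^ 2 ≤ (1 / μ 0 x - 1) * ∑ y, g y ^ 2 * μ 0 y := hpw
      _ ≤ (1 / μ 0 x - 1) * (P ^ 2 * (1 / μ n z - 1)) :=
          mul_le_mul_of_nonneg_left hcontr hA
  calc |Kprod K n x z / μ n z - 1| = Real.sqrt (g x ^ 2) := by
        rw [Real.sqrt_sq_eq_abs, hgx]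
    _ ≤ Real.sqrt ((1 / μ 0 x - 1) * (P ^ 2 * (1 / μ n z - 1))) := Real.sqrt_le_sqrt hkey
    _ = Real.sqrt (1 / μ 0 x - 1) * Real.sqrt (1 / μ n z - 1) * P := by
        rw [Real.sqrt_mul hA, Real.sqrt_mul (sq_nonneg P), Real.sqrt_sq hPnn]
        ring
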